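/- Let S and R be finite sets, N a real S×R matrix, W = range(N), W^⊥ = ker(Nᵀ), and fix distinct i, o ∈ S. Then the following three quantities are equal: (1) the supremum of {u_o : u ∈ W^⊥, and there exist w ∈ W and a strictly positive c̄ ∈ ℝ^S with u − e_i = diag(1/c̄)·w}; (2) the supremum of {u_o : u is elementary in W^⊥ and u_i = 1} ∪ {0}; (3) the supremum of {w_i : w is elementary in W and w_o = −1} ∪ {0}. (Combinatorial characterization of the maximal inverse Precision.) -/

import Mathlib

open Function Matrix
set_option linter.unusedSectionVars false
set_option maxHeartbeats 1000000

/-- A vector `v` is elementary in a linear subspace `V ⊆ ℝ^S` if `v ∈ V`, `v ≠ 0`, and no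
nonzero `v' ∈ V` has support strictly contained in the support of `v`. -/
def IsElementary {S : Type*} (V : Submodule ℝ (S → ℝ)) (v : S → ℝ) : Prop :=
  v ∈ V ∧ v ≠ 0 ∧ ∀ v' ∈ V, v' ≠ 0 → ¬ Function.support v' ⊂ Function.support v

namespace MaxInvP

variable {S : Type*} [Fintype S] [DecidableEq S]

noncomputable section

/-- dot product -/
def dot (x y : S → ℝ) : ℝ := ∑ s, x s * y s

lemma dot_comm (x y : S → ℝ) : dot x y = dot y x := by
  simp [dot, mul_comm]

/-- orthogonal complement w.r.t. dot -/
def perp (V : Submodule ℝ (S → ℝ)) : Submodule ℝ (S → ℝ) where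
  carrier := {x | ∀ v ∈ V, dot x v = 0}
  add_mem' := by
    intro a b ha hb v hv
    have : dot (a + b) v = dot a v + dot b v := by
      simp [dot, add_mul, Finset.sum_add_distrib]
    simp only [Set.mem_setOf_eq] at ha hb ⊢
    rw [this, ha v hv, hb v hv, add_zero]
  zero_mem' := by
    intro v hv; simp [dot]
  smul_mem' := by
    intro c x hx v hv
    have : dot (c • x) v = c * dot x v := by
      simp [dot, Finset.mul_sum, mul_assoc]
    simp only [Set.mem_setOf_eq] at hx ⊢
    rw [this, hx v hv, mul_zero]

lemma mem_perp {V : Submodule ℝ (S → ℝ)} {x : S → ℝ} :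
    x ∈ perp V ↔ ∀ v ∈ V, dot x v = 0 := Iff.rfl

lemma isElementary_smul {V : Submodule ℝ (S → ℝ)} {u : S → ℝ} (h : IsElementary V u)
    {c : ℝ} (hc : c ≠ 0) : IsElementary V (c • u) := by
  obtain ⟨hm, hne, hmin⟩ := h
  refine ⟨V.smul_mem c hm, ?_, ?_⟩
  · simp [smul_eq_zero, hc, hne]
  · intro v' hv' hne' hsub
    rw [Function.support_const_smul_of_ne_zero c u hc] at hsub
    exact hmin v' hv' hne' hsub

lemma eq_smul_of_support_subset {V : Submodule ℝ (S → ℝ)} {u v : S → ℝ}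
    (hu : IsElementary V u) (hv : v ∈ V) (hsub : support v ⊆ support u) :
    ∃ c : ℝ, v = c • u := by
  by_cases hv0 : v = 0
  · exact ⟨0, by simp [hv0]⟩
  have hsupp : support v = support u := by
    rcases lt_or_eq_of_le hsub with h | h
    · exact absurd h (hu.2.2 v hv hv0)
    · exact h
  obtain ⟨s0, hs0⟩ := Function.support_nonempty_iff.mpr hu.2.1
  refine ⟨v s0 / u s0, ?_⟩
  set c := v s0 / u s0 with hc
  have hus0 : u s0 ≠ 0 := hs0
  set z := v - c • u with hz
  have hzV : z ∈ V := V.sub_mem hv (V.smul_mem c hu.1)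
  have hzs0 : z s0 = 0 := by
    simp only [hz, Pi.sub_apply, Pi.smul_apply, smul_eq_mul, hc]
    field_simp
    ring
  have hzsub : support z ⊂ support u := by
    constructor
    · intro s hs
      by_contra hns
      have hu0 : u s = 0 := Function.notMem_support.mp hns
      have hv0' : v s = 0 := by
        by_contra hvs
        exact hns (hsub (Function.mem_support.mpr hvs))
      simp [hz, hv0', hu0] at hs
    · intro hcon
      exact (Function.notMem_support.mpr hzs0) (hcon hs0)
  by_cases hz0 : z = 0
  · have : v = c • u := by
      have := sub_eq_zero.mp (by simpa [hz] using hz0)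
      exact this
    exact this
  · exact absurd hzsub (hu.2.2 z hzV hz0)



/-- `g` is conformal to `v`. -/
def Conf (g v : S → ℝ) : Prop := support g ⊆ support v ∧ ∀ s, 0 ≤ g s * v s

lemma conf_trans {a b c : S → ℝ} (h1 : Conf a b) (h2 : Conf b c) : Conf a c := by
  refine ⟨h1.1.trans h2.1, fun s => ?_⟩
  by_cases ha : a s = 0
  · simp [ha]
  · have hb : b s ≠ 0 := Function.mem_support.mp (h1.1 (Function.mem_support.mpr ha))
    have hb2 : 0 < b s * b s := mul_self_pos.mpr hb
    nlinarith [h1.2 s, h2.2 s, mul_nonneg (h1.2 s) (h2.2 s)]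

lemma support_ncard_lt {a b : S → ℝ} (h : support a ⊂ support b) :
    (support a).ncard < (support b).ncard :=
  Set.ncard_lt_ncard h (Set.toFinite _)

lemma exists_elementary_conf (V : Submodule ℝ (S → ℝ)) :
    ∀ (n : ℕ) (v : S → ℝ), (support v).ncard ≤ n → v ∈ V → v ≠ 0 →
    ∃ g, IsElementary V g ∧ Conf g v := by
  intro n
  induction n with
  | zero =>
    intro v hn hv hv0
    exact absurd (Function.support_eq_empty_iff.mp
      ((Set.ncard_eq_zero (Set.toFinite _)).mp (Nat.le_zero.mp hn))) hv0
  | succ n ih =>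
    intro v hn hv hv0
    set C : Set ℕ := {k | ∃ x, x ∈ V ∧ x ≠ 0 ∧ support x ⊆ support v ∧ (support x).ncard = k}
      with hC
    have hCne : C.Nonempty := ⟨(support v).ncard, v, hv, hv0, subset_rfl, rfl⟩
    obtain ⟨g, hgV, hg0, hgsub, hgcard⟩ := Nat.sInf_mem hCne
    have hgelem : IsElementary V g := by
      refine ⟨hgV, hg0, fun v' hv' hv'0 hss => ?_⟩
      have h1 : (support v').ncard ∈ C :=
        ⟨v', hv', hv'0, (subset_of_ssubset hss).trans hgsub, rfl⟩
      have h2 := Nat.sInf_le h1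
      rw [← hgcard] at h2
      exact absurd h2 (not_le.mpr (support_ncard_lt hss))
    by_cases hpos : ∃ s, 0 < g s * v s
    · obtain ⟨sp, hsp⟩ := hpos
      have hPne : (Finset.univ.filter (fun s => 0 < g s * v s)).Nonempty :=
        ⟨sp, by simp [hsp]⟩
      obtain ⟨st, hstP, hstmin⟩ :=
        Finset.exists_min_image (Finset.univ.filter (fun s => 0 < g s * v s))
          (fun s => v s / g s) hPne
      have hst : 0 < g st * v st := by simpa using hstP
      have hgst : g st ≠ 0 := fun h => by simp [h] at hst
      have hvst : v st ≠ 0 := fun h => by simp [h] at hst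
      set t := v st / g st with ht
      have ht0 : 0 < t := div_pos_iff.mpr (by
        rcases mul_pos_iff.mp hst with ⟨h1, h2⟩ | ⟨h1, h2⟩
        · exact Or.inl ⟨h2, h1⟩
        · exact Or.inr ⟨h2, h1⟩)
      set v' := v - t • g with hv'def
      have hv'V : v' ∈ V := V.sub_mem hv (V.smul_mem t hgV)
      have hsupp' : support v' ⊆ support v := by
        intro s hs
        by_contra hns
        have hvs : v s = 0 := Function.notMem_support.mp hns
        have hgs : g s = 0 := Function.notMem_support.mp (fun hmem => hns (hgsub hmem))
        simp [hv'def, hvs, hgs] at hs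
      have hconf' : Conf v' v := by
        refine ⟨hsupp', fun s => ?_⟩
        by_cases hgs : g s = 0
        · have : v' s = v s := by simp [hv'def, hgs]
          rw [this]; exact mul_self_nonneg _
        · have hvs : v s ≠ 0 :=
            Function.mem_support.mp (hgsub (Function.mem_support.mpr hgs))
          rcases lt_or_gt_of_ne (mul_ne_zero hgs hvs) with hneg | hposs
          · have hkey : v' s * v s = v s * v s - t * (g s * v s) := by
              simp only [hv'def, Pi.sub_apply, Pi.smul_apply, smul_eq_mul]; ring
            nlinarith [mul_self_nonneg (v s)]
          · have hts : t ≤ v s / g s := hstmin s (by simp [hposs])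
            have key : v' s * v s = (g s * v s) * (v s / g s - t) := by
              simp only [hv'def, Pi.sub_apply, Pi.smul_apply, smul_eq_mul]
              field_simp
            rw [key]
            exact mul_nonneg (le_of_lt hposs) (sub_nonneg.mpr hts)
      have hst0 : v' st = 0 := by
        simp only [hv'def, Pi.sub_apply, Pi.smul_apply, smul_eq_mul, ht]
        field_simp
        ring
      by_cases hv'0 : v' = 0
      · have hveq : v = t • g := sub_eq_zero.mp (by simpa [hv'def] using hv'0)
        refine ⟨g, hgelem, hgsub, fun s => ?_⟩
        have hvs : v s = t * g s := by rw [hveq]; simp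
        rw [hvs]
        nlinarith [mul_self_nonneg (g s), ht0.le]
      · have hss : support v' ⊂ support v :=
          ⟨hsupp', fun hcon => (Function.notMem_support.mpr hst0)
            (hcon (Function.mem_support.mpr hvst))⟩
        have hcard : (support v').ncard ≤ n :=
          Nat.lt_succ_iff.mp (lt_of_lt_of_le (support_ncard_lt hss) hn)
        obtain ⟨g', hg'elem, hg'conf⟩ := ih v' hcard hv'V hv'0
        exact ⟨g', hg'elem, conf_trans hg'conf hconf'⟩
    · push_neg at hpos
      have helem : IsElementary V (-g) := by
        have := isElementary_smul (V := V) hgelem (c := (-1 : ℝ)) (by norm_num)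
        simpa using this
      refine ⟨-g, helem, ?_, fun s => ?_⟩
      · intro s hs
        exact hgsub (by simpa using hs)
      · have := hpos s
        simp only [Pi.neg_apply]
        nlinarith

lemma conformal_decomposition (V : Submodule ℝ (S → ℝ)) :
    ∀ (n : ℕ) (v : S → ℝ), (support v).ncard ≤ n → v ∈ V →
    ∃ l : List (S → ℝ), (∀ g ∈ l, IsElementary V g ∧ Conf g v) ∧ l.sum = v := by
  intro n
  induction n with
  | zero =>
    intro v hn _
    have hv0 : v = 0 := Function.support_eq_empty_iff.mp
      ((Set.ncard_eq_zero (Set.toFinite _)).mp (Nat.le_zero.mp hn))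
    exact ⟨[], by simp, by simp [hv0]⟩
  | succ n ih =>
    intro v hn hv
    by_cases hv0 : v = 0
    · exact ⟨[], by simp, by simp [hv0]⟩
    obtain ⟨g, hgelem, hgconf⟩ := exists_elementary_conf V (n+1) v hn hv hv0
    obtain ⟨hgsub, hgc⟩ := hgconf
    have hPne : (Finset.univ.filter (fun s => g s ≠ 0)).Nonempty := by
      obtain ⟨s0, hs0⟩ := Function.support_nonempty_iff.mpr hgelem.2.1
      exact ⟨s0, by simp [Function.mem_support.mp hs0]⟩
    obtain ⟨st, hstP, hstmin⟩ :=
      Finset.exists_min_image (Finset.univ.filter (fun s => g s ≠ 0))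
        (fun s => v s / g s) hPne
    have hgst : g st ≠ 0 := by simpa using hstP
    have hvst : v st ≠ 0 :=
      Function.mem_support.mp (hgsub (Function.mem_support.mpr hgst))
    have hstpos : 0 < g st * v st :=
      lt_of_le_of_ne (hgc st) (Ne.symm (mul_ne_zero hgst hvst))
    set t := v st / g st with ht
    have ht0 : 0 < t := div_pos_iff.mpr (by
      rcases mul_pos_iff.mp hstpos with ⟨h1, h2⟩ | ⟨h1, h2⟩
      · exact Or.inl ⟨h2, h1⟩
      · exact Or.inr ⟨h2, h1⟩)
    set v' := v - t • g with hv'def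
    have hv'V : v' ∈ V := V.sub_mem hv (V.smul_mem t hgelem.1)
    have hsupp' : support v' ⊆ support v := by
      intro s hs
      by_contra hns
      have hvs : v s = 0 := Function.notMem_support.mp hns
      have hgs : g s = 0 := Function.notMem_support.mp (fun hmem => hns (hgsub hmem))
      simp [hv'def, hvs, hgs] at hs
    have hconf' : Conf v' v := by
      refine ⟨hsupp', fun s => ?_⟩
      by_cases hgs : g s = 0
      · have : v' s = v s := by simp [hv'def, hgs]
        rw [this]; exact mul_self_nonneg _
      · have hvs : v s ≠ 0 :=
          Function.mem_support.mp (hgsub (Function.mem_support.mpr hgs))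
        have hposs : 0 < g s * v s :=
          lt_of_le_of_ne (hgc s) (Ne.symm (mul_ne_zero hgs hvs))
        have hts : t ≤ v s / g s := hstmin s (by simp [hgs])
        have key : v' s * v s = (g s * v s) * (v s / g s - t) := by
          simp only [hv'def, Pi.sub_apply, Pi.smul_apply, smul_eq_mul]
          field_simp
        rw [key]
        exact mul_nonneg (le_of_lt hposs) (sub_nonneg.mpr hts)
    have hst0 : v' st = 0 := by
      simp only [hv'def, Pi.sub_apply, Pi.smul_apply, smul_eq_mul, ht]
      field_simp
      ring
    have hss : support v' ⊂ support v :=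
      ⟨hsupp', fun hcon => (Function.notMem_support.mpr hst0)
        (hcon (Function.mem_support.mpr hvst))⟩
    have hcard : (support v').ncard ≤ n :=
      Nat.lt_succ_iff.mp (lt_of_lt_of_le (support_ncard_lt hss) hn)
    obtain ⟨l', hl', hsum'⟩ := ih v' hcard hv'V
    refine ⟨(t • g) :: l', ?_, ?_⟩
    · intro h hh
      rcases List.mem_cons.mp hh with rfl | hmem
      · refine ⟨isElementary_smul hgelem (ne_of_gt ht0), ?_, fun s => ?_⟩
        · rw [Function.support_const_smul_of_ne_zero _ _ (ne_of_gt ht0)]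
          exact hgsub
        · simp only [Pi.smul_apply, smul_eq_mul]
          nlinarith [hgc s, ht0.le]
      · obtain ⟨he, hc⟩ := hl' h hmem
        exact ⟨he, conf_trans hc hconf'⟩
    · rw [List.sum_cons, hsum', hv'def, add_comm]
      exact sub_add_cancel v (t • g)

lemma exists_weighted_proj (V : Submodule ℝ (S → ℝ)) (c : S → ℝ) (hc : ∀ s, 0 < c s)
    (x : S → ℝ) : ∃ u ∈ V, (fun s => c s * (u s - x s)) ∈ perp V := by
  classical
  let bil : (S → ℝ) →ₗ[ℝ] (S → ℝ) →ₗ[ℝ] ℝ :=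
    LinearMap.mk₂ ℝ (fun a b => ∑ s, c s * a s * b s)
      (fun a a' b => by
        rw [← Finset.sum_add_distrib]
        exact Finset.sum_congr rfl fun s _ => by simp [Pi.add_apply]; ring)
      (fun r a b => by
        simp only [smul_eq_mul]
        rw [Finset.mul_sum]
        exact Finset.sum_congr rfl fun s _ => by simp only [Pi.smul_apply, smul_eq_mul]; ring)
      (fun a b b' => by
        rw [← Finset.sum_add_distrib]
        exact Finset.sum_congr rfl fun s _ => by simp [Pi.add_apply]; ring)
      (fun r a b => by
        simp only [smul_eq_mul]
        rw [Finset.mul_sum]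
        exact Finset.sum_congr rfl fun s _ => by simp only [Pi.smul_apply, smul_eq_mul]; ring)
  let L : V →ₗ[ℝ] Module.Dual ℝ V := LinearMap.domRestrict₁₂ bil V V
  have hker : ∀ u : V, L u = 0 → u = 0 := by
    intro u hu
    have h0 : (L u) u = 0 := by rw [hu]; rfl
    have h1 : ∑ s, c s * (u : S → ℝ) s * (u : S → ℝ) s = 0 := h0
    have h2 : ∀ s ∈ Finset.univ, (0:ℝ) ≤ c s * (u : S → ℝ) s * (u : S → ℝ) s := by
      intro s _
      nlinarith [mul_nonneg (hc s).le (mul_self_nonneg ((u : S → ℝ) s))]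
    have h3 := (Finset.sum_eq_zero_iff_of_nonneg h2).mp h1
    ext s
    have hts := h3 s (Finset.mem_univ s)
    have hca : c s * ((u : S → ℝ) s * (u : S → ℝ) s) = 0 := by rw [← mul_assoc]; exact hts
    have h5 : (u : S → ℝ) s * (u : S → ℝ) s = 0 :=
      (mul_eq_zero.mp hca).resolve_left (hc s).ne'
    simpa using mul_self_eq_zero.mp h5
  have hinj : Function.Injective L :=
    LinearMap.ker_eq_bot.mp (LinearMap.ker_eq_bot'.mpr hker)
  have hsurj : Function.Surjective L :=
    (LinearMap.injective_iff_surjective_of_finrank_eq_finrank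
      (Subspace.dual_finrank_eq).symm).mp hinj
  obtain ⟨u, hu⟩ := hsurj ((bil x).domRestrict V)
  refine ⟨(u : S → ℝ), u.2, ?_⟩
  intro v hv
  have h1 : (L u) ⟨v, hv⟩ = ((bil x).domRestrict V) ⟨v, hv⟩ := by rw [hu]
  have h2 : ∑ s, c s * (u : S → ℝ) s * v s = ∑ s, c s * x s * v s := h1
  rw [dot]
  have h3 : ∑ s, (fun s => c s * ((u : S → ℝ) s - x s)) s * v s
      = ∑ s, c s * (u : S → ℝ) s * v s - ∑ s, c s * x s * v s := by
    rw [← Finset.sum_sub_distrib]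
    exact Finset.sum_congr rfl fun s _ => by ring
  rw [h3, h2, sub_self]

lemma weighted_proj_min {V : Submodule ℝ (S → ℝ)} {c x u : S → ℝ} (hc : ∀ s, 0 < c s)
    (hu : u ∈ V) (hperp : (fun s => c s * (u s - x s)) ∈ perp V) {v : S → ℝ} (hv : v ∈ V) :
    ∑ s, c s * (u s - x s)^2 ≤ ∑ s, c s * (v s - x s)^2 := by
  have hvu : v - u ∈ V := V.sub_mem hv hu
  have hzero : dot (fun s => c s * (u s - x s)) (v - u) = 0 := hperp _ hvu
  have hexp : ∑ s, c s * (v s - x s)^2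
      = ∑ s, c s * (u s - x s)^2 + ∑ s, c s * (v s - u s)^2
        + 2 * dot (fun s => c s * (u s - x s)) (v - u) := by
    rw [dot, Finset.mul_sum, ← Finset.sum_add_distrib, ← Finset.sum_add_distrib]
    exact Finset.sum_congr rfl fun s _ => by simp [Pi.sub_apply]; ring
  rw [hexp, hzero]
  have h2 : 0 ≤ ∑ s, c s * (v s - u s)^2 :=
    Finset.sum_nonneg fun s _ => mul_nonneg (hc s).le (sq_nonneg _)
  linarith

lemma feasible_identity {V : Submodule ℝ (S → ℝ)} {c u : S → ℝ} {i : S} (hu : u ∈ V)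
    (hperp : (fun s => c s * (u s - (Pi.single i 1 : S → ℝ) s)) ∈ perp V) :
    ∑ s, c s * u s ^ 2 = c i * u i := by
  have h0 := hperp u hu
  rw [dot] at h0
  have hsplit : ∑ s, (c s * (u s - (Pi.single i 1 : S → ℝ) s)) * u s
      = ∑ s, c s * u s ^ 2 - ∑ s, c s * (Pi.single i 1 : S → ℝ) s * u s := by
    rw [← Finset.sum_sub_distrib]
    exact Finset.sum_congr rfl fun s _ => by ring
  have hsingle : ∑ s, c s * (Pi.single i 1 : S → ℝ) s * u s = c i * u i := by
    rw [Finset.sum_eq_single i (fun b _ hb => by simp [Pi.single_apply, hb])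
      (fun h => absurd (Finset.mem_univ i) h)]
    simp
  rw [hsplit, hsingle] at h0
  linarith

lemma feasible_ui_nonneg {V : Submodule ℝ (S → ℝ)} {c u : S → ℝ} {i : S} (hc : ∀ s, 0 < c s)
    (hu : u ∈ V) (hperp : (fun s => c s * (u s - (Pi.single i 1 : S → ℝ) s)) ∈ perp V) :
    0 ≤ u i := by
  have hid := feasible_identity hu hperp
  have h1 : 0 ≤ ∑ s, c s * u s ^ 2 :=
    Finset.sum_nonneg fun s _ => mul_nonneg (hc s).le (sq_nonneg _)
  nlinarith [hc i]

lemma feasible_ui_le_one {V : Submodule ℝ (S → ℝ)} {c u : S → ℝ} {i : S} (hc : ∀ s, 0 < c s)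
    (hu : u ∈ V) (hperp : (fun s => c s * (u s - (Pi.single i 1 : S → ℝ) s)) ∈ perp V) :
    u i ≤ 1 := by
  have hid := feasible_identity hu hperp
  have h1 : c i * u i ^ 2 ≤ ∑ s, c s * u s ^ 2 :=
    Finset.single_le_sum (f := fun s => c s * u s ^ 2)
      (fun s _ => mul_nonneg (hc s).le (sq_nonneg _)) (Finset.mem_univ i)
  have h2 := feasible_ui_nonneg hc hu hperp
  by_contra hcon
  push_neg at hcon
  have h4 : u i < u i ^ 2 := by nlinarith
  have h5 : c i * u i < c i * u i ^ 2 := (mul_lt_mul_iff_right₀ (hc i)).mpr h4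
  linarith

lemma feasible_eq_zero {V : Submodule ℝ (S → ℝ)} {c u : S → ℝ} {i : S} (hc : ∀ s, 0 < c s)
    (hu : u ∈ V) (hperp : (fun s => c s * (u s - (Pi.single i 1 : S → ℝ) s)) ∈ perp V)
    (h0 : u i = 0) : u = 0 := by
  have hid := feasible_identity hu hperp
  rw [h0, mul_zero] at hid
  have h2 : ∀ s ∈ Finset.univ, (0:ℝ) ≤ c s * u s ^ 2 :=
    fun s _ => mul_nonneg (hc s).le (sq_nonneg _)
  have h3 := (Finset.sum_eq_zero_iff_of_nonneg h2).mp hid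
  funext s
  have hts := h3 s (Finset.mem_univ s)
  have h5 : u s ^ 2 = 0 := (mul_eq_zero.mp hts).resolve_left (hc s).ne'
  simpa using sq_eq_zero_iff.mp h5

lemma feasible_eq_single {V : Submodule ℝ (S → ℝ)} {c u : S → ℝ} {i : S} (hc : ∀ s, 0 < c s)
    (hu : u ∈ V) (hperp : (fun s => c s * (u s - (Pi.single i 1 : S → ℝ) s)) ∈ perp V)
    (h1 : u i = 1) : u = Pi.single i 1 := by
  have hid := feasible_identity hu hperp
  rw [h1, mul_one] at hid
  have hsplit : c i * u i ^ 2 + ∑ s ∈ Finset.univ.erase i, c s * u s ^ 2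
      = ∑ s, c s * u s ^ 2 :=
    Finset.add_sum_erase _ (fun s => c s * u s ^ 2) (Finset.mem_univ i)
  rw [h1] at hsplit
  have hrest : ∑ s ∈ Finset.univ.erase i, c s * u s ^ 2 = 0 := by
    rw [hid] at hsplit; nlinarith [hsplit]
  have h2 : ∀ s ∈ Finset.univ.erase i, (0:ℝ) ≤ c s * u s ^ 2 :=
    fun s _ => mul_nonneg (hc s).le (sq_nonneg _)
  have h3 := (Finset.sum_eq_zero_iff_of_nonneg h2).mp hrest
  funext s
  by_cases hs : s = i
  · subst hs; simp [h1]
  · have hmem : s ∈ Finset.univ.erase i := Finset.mem_erase.mpr ⟨hs, Finset.mem_univ s⟩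
    have hts := h3 s hmem
    have h5 : u s ^ 2 = 0 := (mul_eq_zero.mp hts).resolve_left (hc s).ne'
    have hus : u s = 0 := sq_eq_zero_iff.mp h5
    simp [Pi.single_apply, hs, hus]


def Aset (V : Submodule ℝ (S → ℝ)) (i o : S) : Set ℝ :=
  {x | ∃ u ∈ V, ∃ c : S → ℝ, (∀ s, 0 < c s) ∧
    (fun s => c s * (u s - (Pi.single i 1 : S → ℝ) s)) ∈ perp V ∧ x = u o}

def Bset (V : Submodule ℝ (S → ℝ)) (i o : S) : Set ℝ :=
  {x | ∃ u : S → ℝ, IsElementary V u ∧ u i = 1 ∧ x = u o}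

lemma bset_finite (V : Submodule ℝ (S → ℝ)) (i o : S) : (Bset V i o ∪ {0}).Finite := by
  apply Set.Finite.union _ (Set.finite_singleton 0)
  have h1 : Bset V i o ⊆ (fun u : S → ℝ => u o) '' {u | IsElementary V u ∧ u i = 1} := by
    rintro x ⟨u, he, hi, rfl⟩; exact ⟨u, ⟨he, hi⟩, rfl⟩
  apply Set.Finite.subset _ h1
  apply Set.Finite.image
  have hinj : Set.InjOn (fun u : S → ℝ => support u) {u | IsElementary V u ∧ u i = 1} := by
    rintro a ⟨ha, hai⟩ b ⟨hb, hbi⟩ hab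
    have hab' : support a = support b := hab
    obtain ⟨cc, hcc⟩ := eq_smul_of_support_subset hb ha.1 (subset_of_eq hab')
    have hcoord : a i = cc * b i := by rw [hcc]; simp
    rw [hai, hbi, mul_one] at hcoord
    rw [hcc, ← hcoord, one_smul]
  exact Set.Finite.of_finite_image (Set.toFinite _) hinj

lemma list_sum_map_mul_left (β : ℝ) (l : List (S → ℝ)) (i : S) :
    (l.map (fun g => β * g i)).sum = β * (l.map (fun g => g i)).sum := by
  induction l with
  | nil => simp
  | cons a t ih => simp [ih, mul_add]

lemma list_sum_apply (l : List (S → ℝ)) (s : S) : l.sum s = (l.map (fun g => g s)).sum := by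
  induction l with
  | nil => simp
  | cons a t ih => simp [ih]

lemma aset_le (V : Submodule ℝ (S → ℝ)) {i o : S} (hio : i ≠ o) {x : ℝ}
    (hx : x ∈ Aset V i o) : x ≤ sSup (Bset V i o ∪ {0}) := by
  obtain ⟨u, hu, c, hc, hperp, rfl⟩ := hx
  have hbdd := (bset_finite V i o).bddAbove
  have hb0 : (0:ℝ) ≤ sSup (Bset V i o ∪ {0}) := le_csSup hbdd (Or.inr rfl)
  set β := sSup (Bset V i o ∪ {0}) with hβ
  by_cases hu0 : u = 0
  · rw [hu0]; simpa using hb0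
  have hin : 0 ≤ u i := feasible_ui_nonneg hc hu hperp
  have hle1 : u i ≤ 1 := feasible_ui_le_one hc hu hperp
  by_cases hi1 : u i = 1
  · rw [feasible_eq_single hc hu hperp hi1, Pi.single_eq_of_ne (Ne.symm hio)]
    exact hb0
  have hilt : u i < 1 := lt_of_le_of_ne hle1 hi1
  have hipos : 0 < u i := by
    rcases eq_or_lt_of_le hin with h | h
    · exact absurd (feasible_eq_zero hc hu hperp h.symm) hu0
    · exact h
  obtain ⟨l, hl, hsum⟩ := conformal_decomposition V ((support u).ncard) u le_rfl hu
  have hkey : ∀ g ∈ l, g o ≤ β * g i := by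
    intro g hg
    obtain ⟨hgelem, hgsub, hgconf⟩ := hl g hg
    have hdot := hperp g hgelem.1
    rw [dot] at hdot
    set f : S → ℝ := fun s => (c s * (u s - (Pi.single i 1 : S → ℝ) s)) * g s with hf
    have hsplitf : f i + ∑ s ∈ Finset.univ.erase i, f s = 0 := by
      rw [Finset.add_sum_erase _ f (Finset.mem_univ i)]
      exact hdot
    have hterm : ∀ s ∈ Finset.univ.erase i, 0 ≤ f s := by
      intro s hs
      obtain ⟨hsne, _⟩ := Finset.mem_erase.mp hs
      have : f s = c s * (u s * g s) := by
        simp only [hf, Pi.single_apply, hsne, if_false]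
        ring
      rw [this]
      exact mul_nonneg (hc s).le (by nlinarith [hgconf s])
    have hfi : f i = c i * (u i - 1) * g i := by
      simp only [hf, Pi.single_eq_same]
    have hfile : f i ≤ 0 := by
      have : 0 ≤ ∑ s ∈ Finset.univ.erase i, f s := Finset.sum_nonneg hterm
      linarith
    have hgi : 0 ≤ g i := by
      by_contra hneg
      push_neg at hneg
      have : 0 < f i := by
        rw [hfi]
        have h1 : c i * (u i - 1) < 0 := mul_neg_of_pos_of_neg (hc i) (by linarith)
        exact mul_pos_of_neg_of_neg h1 hneg
      linarith
    have hgipos : 0 < g i := by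
      rcases eq_or_lt_of_le hgi with h | h
      · exfalso
        have hfi0 : f i = 0 := by rw [hfi, ← h]; ring
        have hrest : ∑ s ∈ Finset.univ.erase i, f s = 0 := by linarith
        have hall := (Finset.sum_eq_zero_iff_of_nonneg hterm).mp hrest
        apply hgelem.2.1
        funext s
        simp only [Pi.zero_apply]
        by_cases hs : s = i
        · rw [hs]; exact h.symm
        · have hmem : s ∈ Finset.univ.erase i := Finset.mem_erase.mpr ⟨hs, Finset.mem_univ s⟩
          have hfs := hall s hmem
          have hfs' : c s * (u s * g s) = 0 := by
            rw [← hfs]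
            simp only [hf, Pi.single_apply, hs, if_false]
            ring
          have hug : u s * g s = 0 := (mul_eq_zero.mp hfs').resolve_left (hc s).ne'
          by_contra hgs
          have hsup : u s ≠ 0 := Function.mem_support.mp (hgsub (Function.mem_support.mpr hgs))
          exact (mul_ne_zero hsup hgs) hug
      · exact h
    -- normalized elementary vector in Bset
    have helem' : IsElementary V ((g i)⁻¹ • g) :=
      isElementary_smul hgelem (inv_ne_zero (ne_of_gt hgipos))
    have hmemB : (g i)⁻¹ * g o ∈ Bset V i o ∪ {0} := by
      left
      exact ⟨(g i)⁻¹ • g, helem', by simp [inv_mul_cancel₀ (ne_of_gt hgipos)], by simp⟩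
    have hle := le_csSup hbdd hmemB
    calc g o = g i * ((g i)⁻¹ * g o) := by field_simp
    _ ≤ g i * β := by exact mul_le_mul_of_nonneg_left hle hgipos.le
    _ = β * g i := mul_comm _ _
  have huo : u o = (l.map (fun g => g o)).sum := by rw [← hsum, list_sum_apply]
  have hui : u i = (l.map (fun g => g i)).sum := by rw [← hsum, list_sum_apply]
  have hsumle : (l.map (fun g => g o)).sum ≤ (l.map (fun g => β * g i)).sum := by
    apply List.sum_le_sum
    intro g hg
    exact hkey g hg
  have hfactor := list_sum_map_mul_left β l i
  rw [huo]
  calc (l.map (fun g => g o)).sum ≤ β * (l.map (fun g => g i)).sum := by rw [← hfactor]; exact hsumle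
  _ = β * u i := by rw [← hui]
  _ ≤ β := by nlinarith

lemma aset_bddAbove (V : Submodule ℝ (S → ℝ)) {i o : S} (hio : i ≠ o) :
    BddAbove (Aset V i o) :=
  ⟨sSup (Bset V i o ∪ {0}), fun _ hx => aset_le V hio hx⟩

lemma scaled_mem_aset {V : Submodule ℝ (S → ℝ)} {i o : S} {u c : S → ℝ} (hu : u ∈ V)
    (hc : ∀ s, 0 < c s)
    (hperp : (fun s => c s * (u s - (Pi.single i 1 : S → ℝ) s)) ∈ perp V)
    (hui : u i < 1) (huin : 0 ≤ u i) {lam : ℝ} (hl0 : 0 < lam) (hl1 : lam ≤ 1) :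
    lam * u o ∈ Aset V i o := by
  have hlui : lam * u i < 1 := lt_of_le_of_lt (mul_le_of_le_one_left huin hl1) hui
  set c' : S → ℝ := fun s => if s = i then c i * (u i - 1) / (lam * u i - 1) else c s / lam
    with hc'
  have hc'pos : ∀ s, 0 < c' s := by
    intro s
    by_cases hs : s = i
    · simp only [hc', hs, if_pos rfl]
      apply div_pos_iff.mpr
      exact Or.inr ⟨mul_neg_of_pos_of_neg (hc i) (by linarith), by linarith⟩
    · simp only [hc', hs, if_neg hs]
      exact div_pos (hc s) hl0
  refine ⟨lam • u, V.smul_mem _ hu, c', hc'pos, ?_, by simp⟩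
  have heq : (fun s => c' s * ((lam • u) s - (Pi.single i 1 : S → ℝ) s))
      = fun s => c s * (u s - (Pi.single i 1 : S → ℝ) s) := by
    funext s
    by_cases hs : s = i
    · subst hs
      simp only [hc', if_pos rfl, Pi.smul_apply, smul_eq_mul, Pi.single_eq_same]
      rw [div_mul_eq_mul_div, div_eq_iff (ne_of_lt (by linarith : lam * u s - 1 < 0))]
    · simp only [hc', if_neg hs, Pi.smul_apply, smul_eq_mul,
        Pi.single_eq_of_ne (fun h => hs h)]
      rw [sub_zero, sub_zero, div_mul_eq_mul_div, mul_comm lam (u s), ← mul_assoc,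
        mul_div_assoc, div_self hl0.ne', mul_one]
  rw [heq]
  exact hperp

lemma aset_sup_nonneg (V : Submodule ℝ (S → ℝ)) {i o : S} (hio : i ≠ o) :
    0 ≤ sSup (Aset V i o) := by
  have hbdd := aset_bddAbove V hio
  have hcpos : ∀ s : S, (0:ℝ) < (fun _ => (1:ℝ)) s := fun _ => one_pos
  obtain ⟨u, hu, hperp⟩ :=
    exists_weighted_proj V (fun _ => (1:ℝ)) hcpos (Pi.single i 1)
  have hin := feasible_ui_nonneg hcpos hu hperp
  have hle1 := feasible_ui_le_one hcpos hu hperp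
  by_cases h0 : u i = 0
  · have hu0 := feasible_eq_zero hcpos hu hperp h0
    have hmem : u o ∈ Aset V i o := ⟨u, hu, _, hcpos, hperp, rfl⟩
    have := le_csSup hbdd hmem
    rw [hu0] at this
    simpa using this
  by_cases h1 : u i = 1
  · have hus := feasible_eq_single hcpos hu hperp h1
    have hmem : u o ∈ Aset V i o := ⟨u, hu, _, hcpos, hperp, rfl⟩
    have := le_csSup hbdd hmem
    rw [hus, Pi.single_eq_of_ne (Ne.symm hio)] at this
    exact this
  have hilt : u i < 1 := lt_of_le_of_ne hle1 h1
  rcases le_or_gt 0 (u o) with h | h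
  · have hmem : u o ∈ Aset V i o := ⟨u, hu, _, hcpos, hperp, rfl⟩
    linarith [le_csSup hbdd hmem]
  · have key : ∀ lam : ℝ, 0 < lam → lam ≤ 1 → lam * u o ≤ sSup (Aset V i o) :=
      fun lam hl0 hl1 =>
        le_csSup hbdd (scaled_mem_aset hu hcpos hperp hilt hin hl0 hl1)
    by_contra hcon
    push_neg at hcon
    set t := sSup (Aset V i o) with hts
    have huo : u o ≠ 0 := ne_of_lt h
    set lam := min 1 (t / (2 * u o)) with hlam
    have hl0 : 0 < lam := lt_min one_pos (div_pos_iff.mpr (Or.inr ⟨hcon, by linarith⟩))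
    have hl1 : lam ≤ 1 := min_le_left _ _
    have hk := key lam hl0 hl1
    have hl2 : lam ≤ t / (2 * u o) := min_le_right _ _
    have hmul : (t / (2 * u o)) * u o ≤ lam * u o :=
      mul_le_mul_of_nonpos_right hl2 h.le
    have heq : (t / (2 * u o)) * u o = t / 2 := by field_simp
    rw [heq] at hmul
    linarith

lemma elem_le_sup_aset (V : Submodule ℝ (S → ℝ)) {i o : S} (hio : i ≠ o) {u : S → ℝ}
    (helem : IsElementary V u) (hui : u i = 1) : u o ≤ sSup (Aset V i o) := by
  classical
  have hbdd := aset_bddAbove V hio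
  have hV : u ∈ V := helem.1
  -- the coordinate-extraction linear functional bound
  set Φ : (S → ℝ) →ₗ[ℝ] (S → ℝ) :=
    { toFun := fun v s => if s = i then v i else if u s = 0 then v s else 0
      map_add' := by
        intro a b; funext s
        by_cases h1 : s = i
        · simp [h1]
        · by_cases h2 : u s = 0 <;> simp [h1, h2]
      map_smul' := by
        intro r a; funext s
        by_cases h1 : s = i
        · simp [h1]
        · by_cases h2 : u s = 0 <;> simp [h1, h2] } with hΦ
  have hΦapp : ∀ (v : S → ℝ) (s : S),
      Φ v s = if s = i then v i else if u s = 0 then v s else 0 := fun v s => rfl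
  set ΦV : V →ₗ[ℝ] (S → ℝ) := Φ.comp V.subtype with hΦV
  have hinj : Function.Injective ΦV := by
    apply LinearMap.ker_eq_bot.mp
    apply LinearMap.ker_eq_bot'.mpr
    intro v hv
    have hv' : ∀ s, (if s = i then (v : S → ℝ) i else if u s = 0 then (v : S → ℝ) s else 0)
        = 0 := by
      intro s
      have h := congrFun hv s
      simpa [hΦV, hΦapp] using h
    have hvi : (v : S → ℝ) i = 0 := by
      have := hv' i
      simpa using this
    have hsub : support (v : S → ℝ) ⊆ support u := by
      intro s hs
      have hvs : (v : S → ℝ) s ≠ 0 := Function.mem_support.mp hs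
      by_contra hns
      have hus : u s = 0 := Function.notMem_support.mp hns
      have hsi : s ≠ i := fun h => by
        rw [h] at hus; rw [hus] at hui; exact one_ne_zero hui.symm
      have := hv' s
      simp [hsi, hus] at this
      exact hvs this
    obtain ⟨cc, hcc⟩ := eq_smul_of_support_subset helem v.2 hsub
    have : (v : S → ℝ) i = cc * u i := by rw [hcc]; simp
    rw [hvi, hui, mul_one] at this
    ext s
    rw [hcc, ← this]
    simp
  set e := LinearEquiv.ofInjective ΦV hinj with he
  set g : (LinearMap.range ΦV) →ₗ[ℝ] ℝ :=
    ((LinearMap.proj o).comp V.subtype).comp e.symm.toLinearMap with hg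
  obtain ⟨g', hg'⟩ := g.exists_extend
  set C := ∑ s, |g' (fun j => if s = j then (1:ℝ) else 0)| with hC
  have hC0 : 0 ≤ C := Finset.sum_nonneg fun s _ => abs_nonneg _
  have hval : ∀ v : V, (v : S → ℝ) o = g' (Φ (v : S → ℝ)) := by
    intro v
    have h1 : e.symm (e v) = v := e.symm_apply_apply v
    have h2 : g (e v) = (v : S → ℝ) o := by rw [hg]; simp [h1]
    have h3 : g' ((LinearMap.range ΦV).subtype (e v)) = g (e v) := by
      rw [← hg']; rfl
    have h4 : ((LinearMap.range ΦV).subtype (e v)) = ΦV v := by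
      simp [he, LinearEquiv.ofInjective_apply]
    rw [← h2, ← h3, h4]
    rfl
  have hbound : ∀ (v : V) (B : ℝ), (∀ s, |Φ (v : S → ℝ) s| ≤ B) →
      |(v : S → ℝ) o| ≤ C * B := by
    intro v B hB
    rw [hval v]
    set y := Φ (v : S → ℝ) with hy
    have hexpand : g' y = ∑ s, y s * g' (fun j => if s = j then (1:ℝ) else 0) := by
      conv_lhs => rw [pi_eq_sum_univ y]
      rw [map_sum]
      exact Finset.sum_congr rfl fun s _ => by rw [g'.map_smul]; rfl
    rw [hexpand]
    calc |∑ s, y s * g' (fun j => if s = j then (1:ℝ) else 0)|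
        ≤ ∑ s, |y s * g' (fun j => if s = j then (1:ℝ) else 0)| :=
          Finset.abs_sum_le_sum_abs _ _
      _ ≤ ∑ s, B * |g' (fun j => if s = j then (1:ℝ) else 0)| := by
          apply Finset.sum_le_sum
          intro s _
          rw [abs_mul]
          exact mul_le_mul_of_nonneg_right (hB s) (abs_nonneg _)
      _ = C * B := by rw [← Finset.mul_sum, mul_comm, hC]
  -- the approximation argument
  set m := ∑ s, u s ^ 2 with hm
  have hm0 : 0 ≤ m := Finset.sum_nonneg fun s _ => sq_nonneg _
  by_contra hcon
  push_neg at hcon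
  set ε := (u o - sSup (Aset V i o)) / 2 with hε
  have hε0 : 0 < ε := by simp only [hε]; linarith
  -- choose t
  set t := min (1/2) (ε ^ 2 / (C ^ 2 * m + 1)) with htdef
  have ht0 : 0 < t := lt_min (by norm_num) (div_pos (pow_pos hε0 2) (by positivity))
  have ht1 : t ≤ 1 := le_trans (min_le_left _ _) (by norm_num)
  set cw : S → ℝ := fun s => if s = i then 1 else if u s = 0 then 1/t else t with hcw
  have hcwpos : ∀ s, 0 < cw s := by
    intro s
    by_cases h1 : s = i
    · simp [hcw, h1]
    · by_cases h2 : u s = 0 <;> simp [hcw, h1, h2] <;> positivity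
  obtain ⟨u', hu', hperp'⟩ := exists_weighted_proj V cw hcwpos (Pi.single i 1)
  have hmin := weighted_proj_min hcwpos hu' hperp' hV
  have hFu : ∑ s, cw s * (u s - (Pi.single i 1 : S → ℝ) s) ^ 2 ≤ t * m := by
    rw [hm, Finset.mul_sum]
    apply Finset.sum_le_sum
    intro s _
    by_cases h1 : s = i
    · have hz : cw s * (u s - (Pi.single i 1 : S → ℝ) s) ^ 2 = 0 := by
        rw [h1]
        simp [hcw, hui]
      rw [hz]
      positivity
    · by_cases h2 : u s = 0
      · have hz : cw s * (u s - (Pi.single i 1 : S → ℝ) s) ^ 2 = 0 := by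
          simp [h2, Pi.single_eq_of_ne (fun h => h1 h)]
        rw [hz]
        positivity
      · have hz : cw s * (u s - (Pi.single i 1 : S → ℝ) s) ^ 2 = t * u s ^ 2 := by
          simp only [hcw, if_neg h1, if_neg h2, Pi.single_eq_of_ne (fun h => h1 h), sub_zero]
        rw [hz]
  have hF' : ∑ s, cw s * (u' s - (Pi.single i 1 : S → ℝ) s) ^ 2 ≤ t * m :=
    le_trans hmin hFu
  have hterm : ∀ s, cw s * (u' s - (Pi.single i 1 : S → ℝ) s) ^ 2 ≤ t * m := by
    intro s
    refine le_trans ?_ hF'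
    exact Finset.single_le_sum
      (f := fun s => cw s * (u' s - (Pi.single i 1 : S → ℝ) s) ^ 2)
      (fun s _ => mul_nonneg (hcwpos s).le (sq_nonneg _)) (Finset.mem_univ s)
  -- coordinate bounds on Φ (u' - u)
  set z : V := ⟨u' - u, V.sub_mem hu' hV⟩ with hz
  have hzbound : ∀ s, |Φ ((z : V) : S → ℝ) s| ≤ Real.sqrt (t * m) := by
    intro s
    by_cases h1 : s = i
    · subst h1
      have h2 : Φ ((z : V) : S → ℝ) s = u' s - 1 := by
        simp [hΦapp, hz, hui]
      rw [h2]
      have h3 := hterm s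
      simp only [hcw, if_pos rfl, one_mul, Pi.single_eq_same] at h3
      calc |u' s - 1| = Real.sqrt ((u' s - 1)^2) := (Real.sqrt_sq_eq_abs _).symm
        _ ≤ Real.sqrt (t * m) := Real.sqrt_le_sqrt h3
    · by_cases h2 : u s = 0
      · have h3 : Φ ((z : V) : S → ℝ) s = u' s := by
          simp [hΦapp, h1, h2, hz]
        rw [h3]
        have h4 := hterm s
        simp only [hcw, if_neg h1, if_pos h2,
          Pi.single_eq_of_ne (fun h => h1 h), sub_zero] at h4
        have h5 : u' s ^ 2 ≤ t * (t * m) := by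
          rw [div_mul_eq_mul_div, one_mul] at h4
          calc u' s ^2 = t * (u' s ^2 / t) := by field_simp
          _ ≤ t * (t * m) := mul_le_mul_of_nonneg_left h4 ht0.le
        have h6 : t * (t * m) ≤ t * m := by nlinarith
        calc |u' s| = Real.sqrt ((u' s)^2) := (Real.sqrt_sq_eq_abs _).symm
          _ ≤ Real.sqrt (t * m) := Real.sqrt_le_sqrt (le_trans h5 h6)
      · have h3 : Φ ((z : V) : S → ℝ) s = 0 := by simp [hΦapp, h1, h2]
        rw [h3]
        simp only [abs_zero]
        positivity
  have hzo := hbound z (Real.sqrt (t * m)) hzbound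
  have hzo' : |u' o - u o| ≤ C * Real.sqrt (t * m) := hzo
  -- C * sqrt (t m) ≤ ε
  have hsqle : C * Real.sqrt (t * m) ≤ ε := by
    have h1 : C ^ 2 * (t * m) ≤ ε ^ 2 := by
      have h2 : t ≤ ε ^ 2 / (C ^ 2 * m + 1) := min_le_right _ _
      have h3 : t * (C ^ 2 * m + 1) ≤ ε ^ 2 :=
        (le_div_iff₀ (by positivity)).mp h2
      nlinarith [ht0]
    calc C * Real.sqrt (t * m) = Real.sqrt (C ^ 2 * (t * m)) := by
          rw [Real.sqrt_mul (sq_nonneg C), Real.sqrt_sq hC0]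
      _ ≤ Real.sqrt (ε ^ 2) := Real.sqrt_le_sqrt h1
      _ = ε := Real.sqrt_sq hε0.le
  have hmem : u' o ∈ Aset V i o := ⟨u', hu', cw, hcwpos, hperp', rfl⟩
  have hle := le_csSup hbdd hmem
  have habs := abs_le.mp hzo'
  have : u o ≤ sSup (Aset V i o) + ε := by
    have : u o - u' o ≤ C * Real.sqrt (t * m) := by
      have := habs.1
      linarith
    linarith [hsqle]
  simp only [hε] at this
  linarith

theorem core_eq (V : Submodule ℝ (S → ℝ)) {i o : S} (hio : i ≠ o) :
    sSup (Aset V i o) = sSup (Bset V i o ∪ {0}) := by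
  apply le_antisymm
  · exact Real.sSup_le (fun x hx => aset_le V hio hx)
      (le_csSup (bset_finite V i o).bddAbove (Or.inr rfl))
  · apply Real.sSup_le
    · rintro x (⟨u, helem, hui, rfl⟩ | hx0)
      · exact elem_le_sup_aset V hio helem hui
      · rw [Set.mem_singleton_iff.mp hx0]
        exact aset_sup_nonneg V hio
    · exact aset_sup_nonneg V hio

lemma perp_perp (V : Submodule ℝ (S → ℝ)) : perp (perp V) = V := by
  classical
  set ee : EuclideanSpace ℝ S ≃ₗ[ℝ] (S → ℝ) := WithLp.linearEquiv 2 ℝ (∀ _ : S, ℝ)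
    with hee
  have hinner : ∀ (x y : S → ℝ), (inner ℝ (ee.symm x) (ee.symm y) : ℝ) = dot x y := by
    intro x y
    rw [dot]
    simp only [PiLp.inner_apply, RCLike.inner_apply, starRingEnd_apply, star_trivial]
    exact Finset.sum_congr rfl fun s _ => mul_comm _ _
  have hmm : ∀ (X : Submodule ℝ (S → ℝ)) (x : S → ℝ),
      x ∈ X ↔ ee.symm x ∈ Submodule.map ee.symm.toLinearMap X := by
    intro X x
    constructor
    · intro h; exact ⟨x, h, rfl⟩
    · rintro ⟨v, hv, hvx⟩
      have hveq : v = x := by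
        have := congrArg ee hvx
        simpa using this
      rwa [← hveq]
  have key : ∀ (X : Submodule ℝ (S → ℝ)),
      Submodule.map ee.symm.toLinearMap (perp X) = (Submodule.map ee.symm.toLinearMap X)ᗮ := by
    intro X
    ext w
    constructor
    · rintro ⟨x, hx, rfl⟩
      rw [Submodule.mem_orthogonal]
      rintro q ⟨v, hv, rfl⟩
      show (inner ℝ (ee.symm v) (ee.symm x) : ℝ) = 0
      rw [hinner, dot_comm]
      exact hx v hv
    · intro hw
      refine ⟨ee w, ?_, by simp⟩
      intro v hv
      have h := (Submodule.mem_orthogonal _ _).mp hw (ee.symm v) ⟨v, hv, rfl⟩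
      have h2 : (inner ℝ (ee.symm v) (ee.symm (ee w)) : ℝ) = 0 := by
        rw [ee.symm_apply_apply]; exact h
      rw [hinner] at h2
      rw [dot_comm]
      exact h2
  have hchain : Submodule.map ee.symm.toLinearMap (perp (perp V))
      = Submodule.map ee.symm.toLinearMap V := by
    rw [key, key, Submodule.orthogonal_orthogonal]
  ext x
  rw [hmm (perp (perp V)) x, hchain, ← hmm V x]

def flipMap (i : S) : (S → ℝ) →ₗ[ℝ] (S → ℝ) where
  toFun := fun v s => if s = i then -v s else v s
  map_add' := by
    intro a b; funext s; by_cases h : s = i <;> simp [h] <;> ring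
  map_smul' := by
    intro r a; funext s; by_cases h : s = i <;> simp [h] <;> ring

lemma flip_apply (i : S) (v : S → ℝ) (s : S) :
    flipMap i v s = if s = i then -v s else v s := rfl

lemma flip_flip (i : S) (v : S → ℝ) : flipMap i (flipMap i v) = v := by
  funext s; by_cases h : s = i <;> simp [flip_apply, h]

lemma dot_flip_right (i : S) (x y : S → ℝ) : dot x (flipMap i y) = dot (flipMap i x) y := by
  rw [dot, dot]
  refine Finset.sum_congr rfl fun s _ => ?_
  by_cases h : s = i <;> simp [flip_apply, h] <;> ring

lemma flip_support (i : S) (v : S → ℝ) : support (flipMap i v) = support v := by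
  ext s; by_cases h : s = i <;> simp [flip_apply, h]

lemma mem_flip_map {i : S} {X : Submodule ℝ (S → ℝ)} {q : S → ℝ} :
    q ∈ Submodule.map (flipMap i) X ↔ flipMap i q ∈ X := by
  constructor
  · rintro ⟨w, hw, rfl⟩; rwa [flip_flip]
  · intro h; exact ⟨flipMap i q, h, flip_flip i q⟩

lemma flip_eq_zero {i : S} {v : S → ℝ} : flipMap i v = 0 ↔ v = 0 := by
  constructor
  · intro h; have := congrArg (flipMap i) h; rwa [flip_flip, map_zero] at this
  · rintro rfl; exact map_zero _

lemma perp_flip_map (i : S) (X : Submodule ℝ (S → ℝ)) :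
    perp (Submodule.map (flipMap i) X) = Submodule.map (flipMap i) (perp X) := by
  ext x
  constructor
  · intro hx
    rw [mem_flip_map]
    intro v hv
    have h := hx (flipMap i v) (Submodule.mem_map_of_mem hv)
    rwa [dot_flip_right] at h
  · intro hx v hv
    have h := (mem_flip_map.mp hx) (flipMap i v) (mem_flip_map.mp hv)
    rw [← dot_flip_right i x (flipMap i v), flip_flip] at h
    exact h

lemma isElementary_flip {i : S} {X : Submodule ℝ (S → ℝ)} {v : S → ℝ} :
    IsElementary (Submodule.map (flipMap i) X) v ↔ IsElementary X (flipMap i v) := by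
  constructor
  · rintro ⟨hm, h0, hmin⟩
    refine ⟨mem_flip_map.mp hm, fun h => h0 (flip_eq_zero.mp h), ?_⟩
    intro v' hv' h0' hss
    rw [flip_support] at hss
    exact hmin (flipMap i v') (Submodule.mem_map_of_mem hv')
      (fun h => h0' (flip_eq_zero.mp h)) (by rwa [flip_support])
  · rintro ⟨hm, h0, hmin⟩
    refine ⟨mem_flip_map.mpr hm, fun h => h0 (by rw [h, map_zero]), ?_⟩
    intro v' hv' h0' hss
    exact hmin (flipMap i v') (mem_flip_map.mp hv')
      (fun h => h0' (flip_eq_zero.mp h))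
      (by rw [flip_support, flip_support]; exact hss)

lemma pairing_expand {i o : S} (hio : i ≠ o) (u p : S → ℝ) :
    ∑ s, (u s - (Pi.single i 1 : S → ℝ) s) * (p s - (Pi.single o 1 : S → ℝ) s)
      = dot u p - u o - p i := by
  have h1 : ∑ s, u s * (Pi.single o 1 : S → ℝ) s = u o := by
    rw [Finset.sum_eq_single o (fun b _ hb => by simp [Pi.single_apply, hb])
      (fun h => absurd (Finset.mem_univ o) h)]
    simp
  have h2 : ∑ s, (Pi.single i 1 : S → ℝ) s * p s = p i := by
    rw [Finset.sum_eq_single i (fun b _ hb => by simp [Pi.single_apply, hb])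
      (fun h => absurd (Finset.mem_univ i) h)]
    simp
  have h3 : ∑ s, (Pi.single i 1 : S → ℝ) s * (Pi.single o 1 : S → ℝ) s = 0 := by
    apply Finset.sum_eq_zero
    intro s _
    by_cases hs : s = i
    · rw [hs, Pi.single_eq_of_ne hio, mul_zero]
    · rw [Pi.single_eq_of_ne hs, zero_mul]
  have hsplit : ∑ s, (u s - (Pi.single i 1 : S → ℝ) s) * (p s - (Pi.single o 1 : S → ℝ) s)
      = ∑ s, (u s * p s - u s * (Pi.single o 1 : S → ℝ) s
          - (Pi.single i 1 : S → ℝ) s * p s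
          + (Pi.single i 1 : S → ℝ) s * (Pi.single o 1 : S → ℝ) s) :=
    Finset.sum_congr rfl fun s _ => by ring
  rw [hsplit, Finset.sum_add_distrib, Finset.sum_sub_distrib, Finset.sum_sub_distrib,
    h1, h2, h3, add_zero, dot]

lemma aset_flip_dual (V : Submodule ℝ (S → ℝ)) {i o : S} (hio : i ≠ o) :
    Aset V i o = Aset (Submodule.map (flipMap i) (perp V)) o i := by
  have hWperp : perp (Submodule.map (flipMap i) (perp V)) = Submodule.map (flipMap i) V := by
    rw [perp_flip_map, perp_perp]
  ext x
  constructor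
  · rintro ⟨u, hu, c, hc, hw, rfl⟩
    obtain ⟨p, hp, hy⟩ := exists_weighted_proj (perp V) (fun s => (c s)⁻¹)
      (fun s => inv_pos.mpr (hc s)) (Pi.single o 1)
    rw [perp_perp] at hy
    have hpair : u o = -(p i) := by
      have h0 := hw _ hy
      rw [dot] at h0
      have hsimp : ∑ s, (fun s => c s * (u s - (Pi.single i 1 : S → ℝ) s)) s
            * (fun s => (c s)⁻¹ * (p s - (Pi.single o 1 : S → ℝ) s)) s
          = ∑ s, (u s - (Pi.single i 1 : S → ℝ) s) * (p s - (Pi.single o 1 : S → ℝ) s) := by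
        refine Finset.sum_congr rfl fun s _ => ?_
        have := (hc s).ne'
        field_simp
      rw [hsimp, pairing_expand hio] at h0
      have hup : dot u p = 0 := by rw [dot_comm]; exact hp u hu
      rw [hup] at h0
      linarith
    refine ⟨flipMap i p, Submodule.mem_map_of_mem hp, fun s => (c s)⁻¹,
      fun s => inv_pos.mpr (hc s), ?_, ?_⟩
    · rw [hWperp, mem_flip_map]
      have heq : flipMap i (fun s => (c s)⁻¹ * (flipMap i p s - (Pi.single o 1 : S → ℝ) s))
          = fun s => (c s)⁻¹ * (p s - (Pi.single o 1 : S → ℝ) s) := by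
        funext s
        by_cases hs : s = i
        · rw [hs]
          simp [flip_apply, Pi.single_eq_of_ne hio]
        · simp only [flip_apply, if_neg hs]
      rw [heq]
      exact hy
    · rw [hpair]
      simp [flip_apply]
  · rintro ⟨q, hq, d, hd, hyq, rfl⟩
    rw [hWperp, mem_flip_map] at hyq
    set p := flipMap i q with hpq
    have hpW : p ∈ perp V := mem_flip_map.mp hq
    have hyq' : (fun s => d s * (p s - (Pi.single o 1 : S → ℝ) s)) ∈ V := by
      have heq : flipMap i (fun s => d s * (q s - (Pi.single o 1 : S → ℝ) s))
          = fun s => d s * (p s - (Pi.single o 1 : S → ℝ) s) := by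
        funext s
        by_cases hs : s = i
        · rw [hs]
          simp [flip_apply, hpq, Pi.single_eq_of_ne hio]
        · simp only [flip_apply, hpq, if_neg hs]
      rw [← heq]
      exact hyq
    obtain ⟨u, hu, hw⟩ := exists_weighted_proj V (fun s => (d s)⁻¹)
      (fun s => inv_pos.mpr (hd s)) (Pi.single i 1)
    have hpair : u o = -(p i) := by
      have h0 := hw _ hyq'
      rw [dot] at h0
      have hsimp : ∑ s, (fun s => (d s)⁻¹ * (u s - (Pi.single i 1 : S → ℝ) s)) s
            * (fun s => d s * (p s - (Pi.single o 1 : S → ℝ) s)) s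
          = ∑ s, (u s - (Pi.single i 1 : S → ℝ) s) * (p s - (Pi.single o 1 : S → ℝ) s) := by
        refine Finset.sum_congr rfl fun s _ => ?_
        have := (hd s).ne'
        field_simp
      rw [hsimp, pairing_expand hio] at h0
      have hup : dot u p = 0 := by rw [dot_comm]; exact hpW u hu
      rw [hup] at h0
      linarith
    have hqi : q i = -(p i) := by simp [hpq, flip_apply]
    exact ⟨u, hu, fun s => (d s)⁻¹, fun s => inv_pos.mpr (hd s), hw, by rw [hqi, ← hpair]⟩

lemma bset_flip (V : Submodule ℝ (S → ℝ)) {i o : S} (hio : i ≠ o) :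
    Bset (Submodule.map (flipMap i) (perp V)) o i
      = {x | ∃ w, IsElementary (perp V) w ∧ w o = -1 ∧ x = w i} := by
  ext x
  constructor
  · rintro ⟨v, hv, hvo, rfl⟩
    have h1 : IsElementary (perp V) (flipMap i v) := isElementary_flip.mp hv
    have h2 : IsElementary (perp V) (-(flipMap i v)) := by
      have := isElementary_smul h1 (c := (-1:ℝ)) (by norm_num)
      simpa using this
    refine ⟨-(flipMap i v), h2, ?_, ?_⟩
    · have : flipMap i v o = v o := by simp [flip_apply, Ne.symm hio]
      simp [this, hvo]
    · simp [flip_apply]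
  · rintro ⟨w, hw, hwo, rfl⟩
    have h1 : IsElementary (perp V) (flipMap i (flipMap i (-w))) := by
      rw [flip_flip]
      have := isElementary_smul hw (c := (-1:ℝ)) (by norm_num)
      simpa using this
    refine ⟨flipMap i (-w), isElementary_flip.mpr h1, ?_, ?_⟩
    · have : flipMap i (-w) o = -(w o) := by simp [flip_apply, Ne.symm hio]
      simp [this, hwo]
    · simp [flip_apply]

lemma ker_eq_perp_range {R : Type*} [Fintype R] (N : Matrix S R ℝ) :
    LinearMap.ker Nᵀ.mulVecLin = perp (LinearMap.range N.mulVecLin) := by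
  classical
  ext u
  constructor
  · intro hu v hv
    obtain ⟨y, rfl⟩ := hv
    have hker : Nᵀ.mulVecLin u = 0 := LinearMap.mem_ker.mp hu
    rw [dot]
    have hmv : ∀ s, (N.mulVecLin y) s = ∑ r, N s r * y r := by
      intro s
      simp [Matrix.mulVecLin_apply, Matrix.mulVec, dotProduct]
    calc ∑ s, u s * N.mulVecLin y s
        = ∑ s, ∑ r, u s * (N s r * y r) := by
          refine Finset.sum_congr rfl fun s _ => ?_
          rw [hmv s, Finset.mul_sum]
      _ = ∑ r, ∑ s, u s * (N s r * y r) := Finset.sum_comm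
      _ = 0 := by
          apply Finset.sum_eq_zero
          intro r _
          have hr : (Nᵀ.mulVecLin u) r = 0 := by rw [hker]; rfl
          have hr2 : ∑ s, N s r * u s = 0 := by
            rw [← hr]
            simp [Matrix.mulVecLin_apply, Matrix.mulVec, Matrix.vecMul,
              dotProduct, Matrix.transpose_apply, mul_comm]
          calc ∑ s, u s * (N s r * y r) = (∑ s, N s r * u s) * y r := by
                rw [Finset.sum_mul]
                exact Finset.sum_congr rfl fun s _ => by ring
            _ = 0 := by rw [hr2, zero_mul]
  · intro hu
    rw [LinearMap.mem_ker]
    funext r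
    have hcol := hu (N.mulVecLin (Pi.single r 1)) ⟨Pi.single r 1, rfl⟩
    rw [dot] at hcol
    have hsingle : ∀ s, (N.mulVecLin (Pi.single r 1)) s = N s r := by
      intro s
      simp [Matrix.mulVecLin_apply, Matrix.mulVec_single]
    have hval : (Nᵀ.mulVecLin u) r = ∑ s, N s r * u s := by
      simp [Matrix.mulVecLin_apply, Matrix.mulVec, Matrix.vecMul,
        dotProduct, Matrix.transpose_apply, mul_comm]
    simp only [Pi.zero_apply]
    rw [hval]
    calc ∑ s, N s r * u s = ∑ s, u s * (N.mulVecLin (Pi.single r 1)) s := by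
          refine Finset.sum_congr rfl fun s _ => ?_
          rw [hsingle s]; ring
      _ = 0 := hcol

end
end MaxInvP

open MaxInvP in
/-- Theorem 3.4 (`th:UpperBoundsInvP`): combinatorial characterization of the maximal inverse
Precision: the three suprema coincide. -/
theorem maxInvP_characterization
    {S R : Type*} [Fintype S] [Fintype R] [DecidableEq S]
    (N : Matrix S R ℝ) (i o : S) (hio : i ≠ o) :
    sSup {x : ℝ | ∃ u w cbar : S → ℝ,
        u ∈ LinearMap.ker Nᵀ.mulVecLin ∧
        w ∈ LinearMap.range N.mulVecLin ∧
        (∀ s, 0 < cbar s) ∧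
        (u - Pi.single i 1 = fun s => w s / cbar s) ∧
        x = u o} =
      sSup ({x : ℝ | ∃ u : S → ℝ,
        IsElementary (LinearMap.ker Nᵀ.mulVecLin) u ∧ u i = 1 ∧ x = u o} ∪ {0}) ∧
    sSup ({x : ℝ | ∃ u : S → ℝ,
        IsElementary (LinearMap.ker Nᵀ.mulVecLin) u ∧ u i = 1 ∧ x = u o} ∪ {0}) =
      sSup ({x : ℝ | ∃ w : S → ℝ,
        IsElementary (LinearMap.range N.mulVecLin) w ∧ w o = -1 ∧ x = w i} ∪ {0}) := by
  classical
  set V := LinearMap.ker Nᵀ.mulVecLin with hV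
  have hVeq : V = perp (LinearMap.range N.mulVecLin) := ker_eq_perp_range N
  have hrange : perp V = LinearMap.range N.mulVecLin := by
    rw [hVeq, perp_perp]
  have hset1 : {x : ℝ | ∃ u w cbar : S → ℝ,
        u ∈ LinearMap.ker Nᵀ.mulVecLin ∧
        w ∈ LinearMap.range N.mulVecLin ∧
        (∀ s, 0 < cbar s) ∧
        (u - Pi.single i 1 = fun s => w s / cbar s) ∧
        x = u o} = Aset V i o := by
    ext x
    constructor
    · rintro ⟨u, w, cbar, hu, hw, hc, heq, rfl⟩
      refine ⟨u, hu, cbar, hc, ?_, rfl⟩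
      have hwe : (fun s => cbar s * (u s - (Pi.single i 1 : S → ℝ) s)) = w := by
        funext s
        have h := congrFun heq s
        rw [Pi.sub_apply] at h
        rw [h, mul_comm]
        exact div_mul_cancel₀ _ (hc s).ne'
      rw [hwe, hrange]
      exact hw
    · rintro ⟨u, hu, c, hc, hperp, rfl⟩
      refine ⟨u, (fun s => c s * (u s - (Pi.single i 1 : S → ℝ) s)), c, hu, ?_, hc, ?_, rfl⟩
      · rw [← hrange]; exact hperp
      · funext s
        rw [Pi.sub_apply]
        exact (mul_div_cancel_left₀ _ (hc s).ne').symm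
  have hbset1 : {x : ℝ | ∃ u : S → ℝ,
      IsElementary (LinearMap.ker Nᵀ.mulVecLin) u ∧ u i = 1 ∧ x = u o} = Bset V i o := rfl
  constructor
  · rw [hset1, hbset1]
    exact core_eq V hio
  · rw [hbset1]
    set W' := Submodule.map (flipMap i) (perp V) with hW'
    calc sSup (Bset V i o ∪ {0}) = sSup (Aset V i o) := (core_eq V hio).symm
      _ = sSup (Aset W' o i) := by rw [aset_flip_dual V hio]
      _ = sSup (Bset W' o i ∪ {0}) := core_eq W' (Ne.symm hio)
      _ = sSup ({x : ℝ | ∃ w : S → ℝ,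
            IsElementary (perp V) w ∧ w o = -1 ∧ x = w i} ∪ {0}) := by
          rw [hW', bset_flip V hio]
      _ = sSup ({x : ℝ | ∃ w : S → ℝ,
            IsElementary (LinearMap.range N.mulVecLin) w ∧ w o = -1 ∧ x = w i} ∪ {0}) := by
          rw [hrange]
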